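/- Let μ be a compactly supported probability measure on ℝ and t > 0. If (α, β) ⊆ ℝ is an open interval such that for every a₀ ∈ (α, β) one has ∫ dμ(x)/((a₀-x)²) ≤ 1/t, then μ((α, β)) = 0. -/

import Mathlib

set_option maxHeartbeats 1000000


open MeasureTheory
open scoped ENNReal

lemma inner_top {α β x : ℝ} (hx : x ∈ Set.Ioo α β) :
    ∫⁻ a in Set.Ioo α β, ENNReal.ofReal (1 / (a - x) ^ 2) = ⊤ := by
  by_contra hI
  obtain ⟨n, hn⟩ := ENNReal.exists_nat_gt hI
  set r : ℝ := min (β - x) (1 / (n + 1)) with hrdef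
  have hr0 : 0 < r := lt_min (by linarith [hx.2]) (by positivity)
  have hr1 : r ≤ β - x := min_le_left _ _
  have hr2 : r ≤ 1 / (n + 1) := min_le_right _ _
  have hsub : Set.Ioo x (x + r) ⊆ Set.Ioo α β := by
    intro a ha
    exact ⟨lt_trans hx.1 ha.1, by linarith [ha.2]⟩
  have hbound : ∀ a ∈ Set.Ioo x (x + r),
      ENNReal.ofReal (1 / r ^ 2) ≤ ENNReal.ofReal (1 / (a - x) ^ 2) := by
    intro a ha
    apply ENNReal.ofReal_le_ofReal
    have h1 : 0 < a - x := by linarith [ha.1]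
    have h2 : a - x < r := by linarith [ha.2]
    apply one_div_le_one_div_of_le (by positivity)
    nlinarith
  have key : ENNReal.ofReal (1 / r ^ 2) * ENNReal.ofReal r
      ≤ ∫⁻ a in Set.Ioo α β, ENNReal.ofReal (1 / (a - x) ^ 2) := by
    calc ENNReal.ofReal (1 / r ^ 2) * ENNReal.ofReal r
        = ∫⁻ _ in Set.Ioo x (x + r), ENNReal.ofReal (1 / r ^ 2) := by
          rw [setLIntegral_const, Real.volume_Ioo]
          congr 2; ring
      _ ≤ ∫⁻ a in Set.Ioo x (x + r), ENNReal.ofReal (1 / (a - x) ^ 2) :=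
          setLIntegral_mono (by measurability) hbound
      _ ≤ _ := lintegral_mono_set hsub
  have hmul : ENNReal.ofReal (1 / r ^ 2) * ENNReal.ofReal r
      = ENNReal.ofReal (1 / r) := by
    rw [← ENNReal.ofReal_mul (by positivity)]
    congr 1
    field_simp
  have hnr : (n : ℝ) ≤ 1 / r := by
    have h1 : 1 / r ≥ n + 1 := by
      rw [ge_iff_le, le_div_iff₀ hr0]
      calc (n + 1 : ℝ) * r ≤ (n + 1) * (1 / (n + 1)) := by
            apply mul_le_mul_of_nonneg_left hr2 (by positivity)
        _ = 1 := by field_simp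
    linarith
  have : (n : ℝ≥0∞) ≤ ∫⁻ a in Set.Ioo α β, ENNReal.ofReal (1 / (a - x) ^ 2) := by
    calc (n : ℝ≥0∞) = ENNReal.ofReal n := (ENNReal.ofReal_natCast n).symm
      _ ≤ ENNReal.ofReal (1 / r) := ENNReal.ofReal_le_ofReal hnr
      _ = _ := hmul.symm
      _ ≤ _ := key
  exact absurd this (not_le.mpr hn)

/-- If for every `a₀` in an open interval `(α, β)` one has
`∫ dμ(x)/(a₀-x)² ≤ 1/t`, then `μ((α,β)) = 0`. -/
theorem stmt_5 (μ : Measure ℝ) [IsProbabilityMeasure μ]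
    (K : Set ℝ) (hK : IsCompact K) (hμK : μ Kᶜ = 0)
    (t : ℝ) (ht : 0 < t) (α β : ℝ)
    (h : ∀ a₀ ∈ Set.Ioo α β,
      ∫⁻ x, ENNReal.ofReal (1 / (a₀ - x) ^ 2) ∂μ ≤ ENNReal.ofReal (1 / t)) :
    μ (Set.Ioo α β) = 0 := by
  by_contra hμ0
  set F : ℝ → ℝ → ℝ≥0∞ := fun x a => ENNReal.ofReal (1 / (a - x) ^ 2) with hF
  have hmeas : Measurable (Function.uncurry F) := by
    apply ENNReal.measurable_ofReal.comp
    apply Measurable.div measurable_const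
    exact ((measurable_snd.sub measurable_fst).pow measurable_const)
  have swap : ∫⁻ x, (∫⁻ a in Set.Ioo α β, F x a) ∂μ
      = ∫⁻ a in Set.Ioo α β, (∫⁻ x, F x a ∂μ) :=
    lintegral_lintegral_swap (μ := μ) (ν := volume.restrict (Set.Ioo α β)) hmeas.aemeasurable
  have h1 : ∫⁻ x, (∫⁻ a in Set.Ioo α β, F x a) ∂μ = ⊤ := by
    have hle : ∫⁻ x in Set.Ioo α β, (∫⁻ a in Set.Ioo α β, F x a) ∂μ
        ≤ ∫⁻ x, (∫⁻ a in Set.Ioo α β, F x a) ∂μ :=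
      setLIntegral_le_lintegral _ _
    have heq : ∫⁻ x in Set.Ioo α β, (∫⁻ a in Set.Ioo α β, F x a) ∂μ = ⊤ := by
      rw [setLIntegral_congr_fun measurableSet_Ioo
        (fun x hx =>
          show (∫⁻ a in Set.Ioo α β, F x a) = ⊤ from inner_top hx)]
      rw [setLIntegral_const]
      exact ENNReal.top_mul hμ0
    rw [heq] at hle
    exact top_le_iff.mp hle
  have h2 : ∫⁻ a in Set.Ioo α β, (∫⁻ x, F x a ∂μ) ≠ ⊤ := by
    apply ne_top_of_le_ne_top (b := ENNReal.ofReal (1 / t) * volume (Set.Ioo α β))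
    · exact ENNReal.mul_ne_top ENNReal.ofReal_ne_top
        (by rw [Real.volume_Ioo]; exact ENNReal.ofReal_ne_top)
    · calc ∫⁻ a in Set.Ioo α β, (∫⁻ x, F x a ∂μ)
          ≤ ∫⁻ _ in Set.Ioo α β, ENNReal.ofReal (1 / t) :=
            setLIntegral_mono measurable_const (fun a ha => h a ha)
        _ = ENNReal.ofReal (1 / t) * volume (Set.Ioo α β) := setLIntegral_const _ _
  rw [h1] at swap
  exact h2 swap.symm
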